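/- arXiv:1606.07160 — 4 statements merged into one kernel-verified Lean document; each statement's English description precedes it below -/
import Mathlib

section
/- Let q_a, q_b be real numbers with 0 < q_a < 1 and 0 < q_b ≤ 1. Then (q_a - q_b)² ≤ q_a·(1 - q_b)² if and only if q_b² ≤ q_a. In particular, if q_b ≤ q_a then (q_a - q_b)² ≤ q_a·(1 - q_b)². -/
/-- For `0 < q_a < 1` and `0 < q_b ≤ 1`, `(q_a - q_b)² ≤ q_a(1 - q_b)²` iff
`q_b² ≤ q_a`; in particular the inequality holds whenever `q_b ≤ q_a`. -/
theorem redundant_inequality_constraint (qa qb : ℝ)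
    (h₁ : 0 < qa) (h₂ : qa < 1) (h₃ : 0 < qb) (h₄ : qb ≤ 1) :
    ((qa - qb) ^ 2 ≤ qa * (1 - qb) ^ 2 ↔ qb ^ 2 ≤ qa) ∧
    (qb ≤ qa → (qa - qb) ^ 2 ≤ qa * (1 - qb) ^ 2) := by
  have key : qa * (1 - qb) ^ 2 - (qa - qb) ^ 2 = (1 - qa) * (qa - qb ^ 2) := by ring
  constructor
  · constructor
    · intro h; nlinarith
    · intro h; nlinarith
  · intro h
    have hq : qb ^ 2 ≤ qa := by nlinarith
    nlinarith [mul_nonneg (by linarith : (0:ℝ) ≤ 1 - qa) (by linarith : (0:ℝ) ≤ qa - qb ^ 2)]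
end

section
/- Let q₀₁₁, q₁₀₁, q₁₁₀ ∈ (0,1] with q₀₁₁ < 1 satisfy q₁₀₁ = q₁₁₀ and q₀₁₁ ≥ q₁₁₀. Then the convergence-divergence network constraints hold: q₀₁₁ ≥ q₁₀₁, q₁₁₀ ≥ q₁₀₁, and q₀₁₁·(1 - q₁₁₀)² ≥ (q₀₁₁ - q₁₀₁)². -/
/-- The three-taxon clock-like tree constraints imply the convergence-
divergence network constraints: `Ω₂ ⊆ Ω₃`. -/
theorem clock_constraints_imply_network (q011 q101 q110 : ℝ)
    (h011 : 0 < q011) (h011' : q011 ≤ 1) (h011'' : q011 < 1)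
    (h101 : 0 < q101) (h101' : q101 ≤ 1)
    (h110 : 0 < q110) (h110' : q110 ≤ 1)
    (heq : q101 = q110) (hge : q110 ≤ q011) :
    q101 ≤ q011 ∧ q101 ≤ q110 ∧
    (q011 - q101) ^ 2 ≤ q011 * (1 - q110) ^ 2 := by
  subst heq
  refine ⟨hge, le_refl _, ?_⟩
  have h1 : q101 ^ 2 ≤ q011 := le_trans (by nlinarith) hge
  nlinarith [mul_nonneg (sub_nonneg.2 h011') (sub_nonneg.2 h1)]
end

section
/- Let q₀₁₁, q₁₀₁, q₁₁₀ ∈ (0,1] satisfy q₀₁₁ ≥ q₁₀₁, q₁₁₀ ≥ q₁₀₁, and q₁₀₁ ≥ q₀₁₁·q₁₁₀. Then q₀₁₁·(1 - q₁₁₀)² ≥ (q₀₁₁ - q₁₀₁)², q₀₁₁ ≥ q₁₀₁·q₁₁₀, and q₁₁₀ ≥ q₀₁₁·q₁₀₁. Hence the intersection Ω₁ ∩ Ω₃ of the non-clock-like-tree and convergence-network constraint sets is defined exactly by {q₀₁₁ ≥ q₁₀₁, q₁₁₀ ≥ q₁₀₁, q₁₀₁ ≥ q₀₁₁·q₁₁₀}.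 -/
/-- The intersection `Ω₁ ∩ Ω₃` of the three-taxon non-clock-like tree and
convergence-divergence network constraint sets reduces to
`{q₀₁₁ ≥ q₁₀₁, q₁₁₀ ≥ q₁₀₁, q₁₀₁ ≥ q₀₁₁q₁₁₀}`. -/
theorem intersection_Omega1_Omega3 (q011 q101 q110 : ℝ)
    (h011 : 0 < q011) (h011' : q011 ≤ 1)
    (h101 : 0 < q101) (h101' : q101 ≤ 1)
    (h110 : 0 < q110) (h110' : q110 ≤ 1)
    (ha : q101 ≤ q011) (hb : q101 ≤ q110) (hc : q011 * q110 ≤ q101) :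
    (q011 - q101) ^ 2 ≤ q011 * (1 - q110) ^ 2 ∧
    q101 * q110 ≤ q011 ∧ q011 * q101 ≤ q110 := by
  refine ⟨?_, ?_, ?_⟩
  · have h1 : q011 - q101 ≤ q011 * (1 - q110) := by nlinarith
    have h2 : (q011 - q101) ^ 2 ≤ (q011 * (1 - q110)) ^ 2 := by
      apply sq_le_sq' <;> nlinarith
    nlinarith [sq_nonneg (1 - q110)]
  · nlinarith
  · nlinarith
end

section
/- In the polynomial ring ℚ[y₁, y₂, q₀₁₁, q₁₀₁, q₁₁₀], the ideal generated by {y₂² - q₀₁₁, y₁²y₂² - q₁₀₁, y₁²y₂² - q₁₁₀} equals the ideal generated by {q₁₀₁ - q₁₁₀, y₂² - q₀₁₁, y₁²q₀₁₁ - q₁₁₀}. -/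
open MvPolynomial

/-- In `ℚ[y₁,y₂,q₀₁₁,q₁₀₁,q₁₁₀]` (variables `X 0, X 1, X 2, X 3, X 4`), the
ideal of the three-taxon clock-like tree generators equals the ideal
generated by its Gröbner basis. -/
theorem groebner_basis_three_taxon_clock :
    Ideal.span ({X 1 ^ 2 - X 2, X 0 ^ 2 * X 1 ^ 2 - X 3, X 0 ^ 2 * X 1 ^ 2 - X 4} :
        Set (MvPolynomial (Fin 5) ℚ)) =
    Ideal.span ({X 3 - X 4, X 1 ^ 2 - X 2, X 0 ^ 2 * X 2 - X 4} :
        Set (MvPolynomial (Fin 5) ℚ)) := by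
  have m1 : (X 1 ^ 2 - X 2 : MvPolynomial (Fin 5) ℚ) ∈
      Ideal.span ({X 1 ^ 2 - X 2, X 0 ^ 2 * X 1 ^ 2 - X 3, X 0 ^ 2 * X 1 ^ 2 - X 4} :
        Set (MvPolynomial (Fin 5) ℚ)) :=
    Ideal.subset_span (by simp)
  have m2 : (X 0 ^ 2 * X 1 ^ 2 - X 3 : MvPolynomial (Fin 5) ℚ) ∈
      Ideal.span ({X 1 ^ 2 - X 2, X 0 ^ 2 * X 1 ^ 2 - X 3, X 0 ^ 2 * X 1 ^ 2 - X 4} :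
        Set (MvPolynomial (Fin 5) ℚ)) :=
    Ideal.subset_span (by simp)
  have m3 : (X 0 ^ 2 * X 1 ^ 2 - X 4 : MvPolynomial (Fin 5) ℚ) ∈
      Ideal.span ({X 1 ^ 2 - X 2, X 0 ^ 2 * X 1 ^ 2 - X 3, X 0 ^ 2 * X 1 ^ 2 - X 4} :
        Set (MvPolynomial (Fin 5) ℚ)) :=
    Ideal.subset_span (by simp)
  have n1 : (X 3 - X 4 : MvPolynomial (Fin 5) ℚ) ∈
      Ideal.span ({X 3 - X 4, X 1 ^ 2 - X 2, X 0 ^ 2 * X 2 - X 4} :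
        Set (MvPolynomial (Fin 5) ℚ)) :=
    Ideal.subset_span (by simp)
  have n2 : (X 1 ^ 2 - X 2 : MvPolynomial (Fin 5) ℚ) ∈
      Ideal.span ({X 3 - X 4, X 1 ^ 2 - X 2, X 0 ^ 2 * X 2 - X 4} :
        Set (MvPolynomial (Fin 5) ℚ)) :=
    Ideal.subset_span (by simp)
  have n3 : (X 0 ^ 2 * X 2 - X 4 : MvPolynomial (Fin 5) ℚ) ∈
      Ideal.span ({X 3 - X 4, X 1 ^ 2 - X 2, X 0 ^ 2 * X 2 - X 4} :
        Set (MvPolynomial (Fin 5) ℚ)) :=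
    Ideal.subset_span (by simp)
  apply le_antisymm <;> rw [Ideal.span_le] <;> intro p hp <;>
    simp only [Set.mem_insert_iff, Set.mem_singleton_iff] at hp <;>
    rcases hp with rfl | rfl | rfl
  · exact n2
  · -- g2 = (x²)·n2 + n3 - n1
    have := Ideal.sub_mem _ (Ideal.add_mem _ (Ideal.mul_mem_left _ (X 0 ^ 2) n2) n3) n1
    rw [SetLike.mem_coe]; convert this using 1; ring
  · -- g3 = (x²)·n2 + n3
    have := Ideal.add_mem _ (Ideal.mul_mem_left _ (X 0 ^ 2) n2) n3
    rw [SetLike.mem_coe]; convert this using 1; ring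
  · -- h1 = g3 - g2
    have := Ideal.sub_mem _ m3 m2
    rw [SetLike.mem_coe]; convert this using 1; ring
  · exact m1
  · -- h3 = g3 - x²·g1
    have := Ideal.sub_mem _ m3 (Ideal.mul_mem_left _ (X 0 ^ 2) m1)
    rw [SetLike.mem_coe]; convert this using 1; ring
end
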